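/- If f is a nonconstant multilinear multivariate polynomial over a field (each variable occurs with degree at most 1 in f) and f is indecomposable, then f is irreducible. -/
import Mathlib


/-- A polynomial is decomposable if it is a product of two nonconstant polynomials
depending on disjoint sets of variables. -/
def Decomposable {F σ : Type*} [Field F] [DecidableEq σ] (f : MvPolynomial σ F) : Prop :=
  ∃ g h : MvPolynomial σ F,
    (¬ ∃ c : F, g = MvPolynomial.C c) ∧ (¬ ∃ c : F, h = MvPolynomial.C c) ∧
    Disjoint g.vars h.vars ∧ f = g * h


open MvPolynomial

lemma aux_mem_vars_iff_degreeOf_pos {F σ : Type*} [CommSemiring F] [DecidableEq σ]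
    (p : MvPolynomial σ F) (i : σ) : i ∈ p.vars ↔ 0 < p.degreeOf i := by
  rw [vars_def, Multiset.mem_toFinset, degreeOf_def, Multiset.count_pos]

lemma aux_degreeOf_mul_eq {F σ : Type*} [Field F] [DecidableEq σ]
    (g h : MvPolynomial σ F) (hg : g ≠ 0) (hh : h ≠ 0) (i : σ) :
    (g * h).degreeOf i = g.degreeOf i + h.degreeOf i := by
  classical
  set s : Finset σ := insert i (g.vars ∪ h.vars) with hs
  set t : Finset σ := s.erase i with ht
  set n := t.card with hn
  set f0 : Option (Fin n) → σ := fun o => o.elim i (fun k => (t.equivFin.symm k : σ)) with hf0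
  have hf0inj : Function.Injective f0 := by
    rintro (_ | a) (_ | b) hab
    · rfl
    · exfalso
      have : (t.equivFin.symm b : σ) ∈ t := (t.equivFin.symm b).2
      simp only [hf0, Option.elim] at hab
      rw [← hab] at this
      exact (Finset.notMem_erase i s) this
    · exfalso
      have : (t.equivFin.symm a : σ) ∈ t := (t.equivFin.symm a).2
      simp only [hf0, Option.elim] at hab
      rw [hab] at this
      exact (Finset.notMem_erase i s) this
    · simp only [hf0, Option.elim] at hab
      have := t.equivFin.symm.injective (Subtype.ext hab)
      rw [this]
  set emb : Fin (n + 1) → σ := f0 ∘ (finSuccEquiv n) with hemb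
  have hembinj : Function.Injective emb := hf0inj.comp (finSuccEquiv n).injective
  have hemb0 : emb 0 = i := by simp [hemb, hf0]
  have hrange : ∀ x ∈ s, x ∈ Set.range emb := by
    intro x hx
    by_cases hxi : x = i
    · exact ⟨0, by rw [hemb0, hxi]⟩
    · have hxt : x ∈ t := Finset.mem_erase.mpr ⟨hxi, hx⟩
      refine ⟨(finSuccEquiv n).symm (some (t.equivFin ⟨x, hxt⟩)), ?_⟩
      simp [hemb, hf0]
  obtain ⟨g', hg'⟩ := exists_rename_eq_of_vars_subset_range g emb hembinj (by
    intro x hx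
    exact hrange x (Finset.mem_insert_of_mem (Finset.mem_union_left _ hx)))
  obtain ⟨h', hh'⟩ := exists_rename_eq_of_vars_subset_range h emb hembinj (by
    intro x hx
    exact hrange x (Finset.mem_insert_of_mem (Finset.mem_union_right _ hx)))
  have hg'0 : g' ≠ 0 := by rintro rfl; simp at hg'; exact hg hg'.symm
  have hh'0 : h' ≠ 0 := by rintro rfl; simp at hh'; exact hh hh'.symm
  have key : ∀ p : MvPolynomial (Fin (n+1)) F, (rename emb p).degreeOf i = p.degreeOf 0 := by
    intro p
    rw [← hemb0]
    exact degreeOf_rename_of_injective hembinj 0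
  rw [← hg', ← hh', ← map_mul, key, key, key,
    ← natDegree_finSuccEquiv, ← natDegree_finSuccEquiv, ← natDegree_finSuccEquiv,
    map_mul]
  exact Polynomial.natDegree_mul
    ((map_ne_zero_iff _ (AlgEquiv.injective _)).mpr hg'0)
    ((map_ne_zero_iff _ (AlgEquiv.injective _)).mpr hh'0)

lemma aux_eq_C_of_vars_empty {F σ : Type*} [CommSemiring F] [DecidableEq σ]
    (p : MvPolynomial σ F) (hp : ∀ i, p.degreeOf i = 0) : ∃ c, p = MvPolynomial.C c := by
  refine ⟨p.coeff 0, ?_⟩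
  ext m
  by_cases hm : m = 0
  · simp [hm]
  · rw [coeff_C, if_neg (Ne.symm hm)]
    by_contra hne
    obtain ⟨j, hj⟩ : ∃ j, m j ≠ 0 := by
      by_contra hall
      push_neg at hall
      exact hm (Finsupp.ext hall)
    have : j ∈ p.vars := (mem_vars j).mpr ⟨m, mem_support_iff.mpr hne, Finsupp.mem_support_iff.mpr hj⟩
    rw [aux_mem_vars_iff_degreeOf_pos] at this
    have h2 := hp j
    omega

theorem multilinear_indecomposable_irreducible {F σ : Type*} [Field F] [DecidableEq σ]
    (f : MvPolynomial σ F)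
    (hnc : ¬ ∃ c : F, f = MvPolynomial.C c)
    (hml : ∀ i : σ, f.degreeOf i ≤ 1)
    (hind : ¬ Decomposable f) :
    Irreducible f := by
  have hf0 : f ≠ 0 := by
    rintro rfl
    exact hnc ⟨0, by simp⟩
  constructor
  · intro hu
    obtain ⟨u, rfl⟩ := hu
    obtain ⟨v, hv⟩ : ∃ v : MvPolynomial σ F, (u : MvPolynomial σ F) * v = 1 :=
      ⟨(u⁻¹ : _), by simp [← Units.val_mul]⟩
    have hv0 : v ≠ 0 := by rintro rfl; simp at hv
    refine hnc (aux_eq_C_of_vars_empty _ (fun i => ?_))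
    have := aux_degreeOf_mul_eq (u : MvPolynomial σ F) v hf0 hv0 i
    rw [hv] at this
    have h1 : (1 : MvPolynomial σ F).degreeOf i = 0 := by
      simpa using MvPolynomial.degreeOf_C (1 : F) i
    omega
  · intro a b hab
    by_contra hcon
    push_neg at hcon
    obtain ⟨ha, hb⟩ := hcon
    have ha0 : a ≠ 0 := by rintro rfl; simp at hab; exact hf0 hab
    have hb0 : b ≠ 0 := by rintro rfl; simp at hab; exact hf0 hab
    have hanc : ¬ ∃ c : F, a = MvPolynomial.C c := by
      rintro ⟨c, rfl⟩
      have hc0 : c ≠ 0 := fun h => ha0 (by rw [h, map_zero])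
      exact ha ((isUnit_iff_ne_zero.mpr hc0).map MvPolynomial.C)
    have hbnc : ¬ ∃ c : F, b = MvPolynomial.C c := by
      rintro ⟨c, rfl⟩
      have hc0 : c ≠ 0 := fun h => hb0 (by rw [h, map_zero])
      exact hb ((isUnit_iff_ne_zero.mpr hc0).map MvPolynomial.C)
    refine hind ⟨a, b, hanc, hbnc, ?_, hab⟩
    rw [Finset.disjoint_left]
    intro i hia hib
    rw [aux_mem_vars_iff_degreeOf_pos] at hia hib
    have hdd := aux_degreeOf_mul_eq a b ha0 hb0 i
    have := hml i
    rw [hab, hdd] at this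
    omega
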